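/- The function α ↦ 1/α + C(α,L,R) (extended by the value (ln L + ln R)/2 at α = 0) is strictly decreasing in α on ℝ, for fixed 0 < L < R. -/

import Mathlib

open Real

noncomputable def Fc : ℝ → ℝ := fun x => if x = 0 then 1/2 else 1/x - 1/(Real.exp x - 1)

lemma exp_sub_one_ne {x : ℝ} (hx : x ≠ 0) : Real.exp x - 1 ≠ 0 := by
  intro h
  exact hx (by rwa [sub_eq_zero, Real.exp_eq_one_iff] at h)

lemma exp_sub_one_pos {x : ℝ} (hx : 0 < x) : 0 < Real.exp x - 1 := by
  linarith [Real.add_one_lt_exp hx.ne']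

lemma sinh_key {x : ℝ} (hx : 0 < x) : x < Real.exp (x/2) - Real.exp (-(x/2)) := by
  have h : x/2 < Real.sinh (x/2) := Real.self_lt_sinh_iff.2 (by linarith)
  rw [Real.sinh_eq] at h
  linarith

lemma key_ineq {x : ℝ} (hx : 0 < x) : Real.exp x * (2 - x) < 2 + x := by
  set h : ℝ → ℝ := fun x => Real.exp (-(x/2)) * (1 + x/2) - Real.exp (x/2) * (1 - x/2) with hh
  have hderiv : ∀ y : ℝ, HasDerivAt h
      (x := y) ((Real.exp (-(y/2)) * (-(1/2))) * (1 + y/2) + Real.exp (-(y/2)) * (1/2)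
        - ((Real.exp (y/2) * (1/2)) * (1 - y/2) + Real.exp (y/2) * (-(1/2)))) := by
    intro y
    have d1 : HasDerivAt (fun z : ℝ => -(z/2)) (-(1/2)) y := by
      exact ((hasDerivAt_id y).div_const 2).neg
    have d2 : HasDerivAt (fun z : ℝ => z/2) (1/2) y := by
      simpa using (hasDerivAt_id y).div_const 2
    have e1 : HasDerivAt (fun z : ℝ => Real.exp (-(z/2)))
        (Real.exp (-(y/2)) * (-(1/2))) y := (Real.hasDerivAt_exp _).comp y d1
    have e2 : HasDerivAt (fun z : ℝ => Real.exp (z/2))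
        (Real.exp (y/2) * (1/2)) y := (Real.hasDerivAt_exp _).comp y d2
    have p1 : HasDerivAt (fun z : ℝ => 1 + z/2) (1/2) y := by
      simpa using d2.const_add 1
    have p2 : HasDerivAt (fun z : ℝ => 1 - z/2) (-(1/2)) y := by
      simpa using d2.const_sub 1
    exact (e1.mul p1).sub (e2.mul p2)
  have hmono : StrictMonoOn h (Set.Ici 0) := by
    apply strictMonoOn_of_deriv_pos (convex_Ici 0)
    · exact (Continuous.continuousOn (by fun_prop))
    · intro y hy
      rw [interior_Ici] at hy
      rw [(hderiv y).deriv]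
      have h1 : Real.exp (-(y/2)) < Real.exp (y/2) :=
        Real.exp_lt_exp.2 (by simp only [Set.mem_Ioi] at hy; linarith)
      have h2 : 0 < Real.exp (-(y/2)) := Real.exp_pos _
      simp only [Set.mem_Ioi] at hy
      nlinarith [hy]
  have h0 : h 0 = 0 := by simp [hh]
  have hpos : 0 < h x := by
    have := hmono (Set.self_mem_Ici) (Set.mem_Ici.2 hx.le) hx
    rwa [h0] at this
  have e1 : Real.exp (x/2) * Real.exp (-(x/2)) = 1 := by
    rw [← Real.exp_add]; norm_num
  have e2 : Real.exp (x/2) * Real.exp (x/2) = Real.exp x := by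
    rw [← Real.exp_add]; ring_nf
  have hs : 0 < Real.exp (x/2) := Real.exp_pos _
  simp only [hh] at hpos
  nlinarith [hpos, hs, e1, e2]

lemma Fc_lt_half {x : ℝ} (hx : 0 < x) : Fc x < 1/2 := by
  rw [Fc, if_neg hx.ne']
  have hA : 0 < Real.exp x - 1 := exp_sub_one_pos hx
  rw [div_sub_div _ _ hx.ne' hA.ne', div_lt_div_iff₀ (by positivity) (by norm_num)]
  nlinarith [key_ineq hx]

lemma Fc_neg (x : ℝ) : Fc (-x) = 1 - Fc x := by
  by_cases hx : x = 0
  · simp [Fc, hx]; norm_num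
  · have hE : Real.exp x ≠ 0 := Real.exp_ne_zero x
    have h1 : Real.exp x - 1 ≠ 0 := exp_sub_one_ne hx
    have h2 : Real.exp (-x) - 1 ≠ 0 := exp_sub_one_ne (neg_ne_zero.2 hx)
    rw [Fc, Fc, if_neg (neg_ne_zero.2 hx), if_neg hx]
    rw [Real.exp_neg] at h2 ⊢
    have h2' : (Real.exp x)⁻¹ - 1 ≠ 0 := h2
    have h3 : 1 - Real.exp x ≠ 0 := fun h => h1 (by linarith [sub_eq_zero.1 h])
    have hx' : (x : ℝ) ≠ 0 := hx
    field_simp [hx', h3]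
    ring

lemma Fc_antiOn : StrictAntiOn Fc (Set.Ioi 0) := by
  have main : StrictAntiOn (fun x : ℝ => 1/x - 1/(Real.exp x - 1)) (Set.Ioi 0) := by
    apply strictAntiOn_of_deriv_neg (convex_Ioi 0)
    · apply ContinuousOn.sub
      · exact continuousOn_const.div continuousOn_id (fun x hx => (Set.mem_Ioi.1 hx).ne')
      · exact continuousOn_const.div
          ((Real.continuous_exp.continuousOn).sub continuousOn_const)
          (fun x hx => (exp_sub_one_pos (Set.mem_Ioi.1 hx)).ne')
    · intro x hx
      rw [interior_Ioi] at hx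
      have hx : 0 < x := Set.mem_Ioi.1 hx
      have hA : 0 < Real.exp x - 1 := exp_sub_one_pos hx
      have d1 : HasDerivAt (fun z : ℝ => 1/z - 1/(Real.exp z - 1))
          (-1 / x^2 - (-(Real.exp x) / (Real.exp x - 1)^2)) x := by
        have i1 : HasDerivAt (fun z : ℝ => z⁻¹) (-(x^2)⁻¹) x := hasDerivAt_inv hx.ne'
        have i2 : HasDerivAt (fun z : ℝ => (Real.exp z - 1)⁻¹)
            (-(Real.exp x) / (Real.exp x - 1)^2) x :=
          ((Real.hasDerivAt_exp x).sub_const 1).inv hA.ne'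
        simp only [one_div]
        exact (i1.sub i2).congr_deriv (by ring)
      rw [d1.deriv]
      have key : x < Real.exp (x/2) - Real.exp (-(x/2)) := sinh_key hx
      have e1 : Real.exp (x/2) * Real.exp (-(x/2)) = 1 := by
        rw [← Real.exp_add]; norm_num
      have e2 : Real.exp (x/2) * Real.exp (x/2) = Real.exp x := by
        rw [← Real.exp_add]; ring_nf
      have hs : 0 < Real.exp (x/2) := Real.exp_pos _
      have ht : 0 < Real.exp (-(x/2)) := Real.exp_pos _
      have hlt : x^2 * Real.exp x < (Real.exp x - 1)^2 := by
        have hfac : Real.exp x - 1 =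
            Real.exp (x/2) * (Real.exp (x/2) - Real.exp (-(x/2))) := by
          rw [mul_sub, e1, e2]
        rw [hfac]
        have h5 : 0 < (Real.exp (x/2) - Real.exp (-(x/2))) - x := by linarith
        have h6 : 0 < (Real.exp (x/2) - Real.exp (-(x/2))) + x := by linarith
        nlinarith [mul_pos (mul_pos hs hs) (mul_pos h5 h6), e2]
      have hE : 0 < Real.exp x := Real.exp_pos x
      have hmain : Real.exp x / (Real.exp x - 1)^2 < 1/x^2 := by
        rw [div_lt_div_iff₀ (by positivity) (by positivity)]
        nlinarith [hlt]
      have heq : -1/x^2 - -(Real.exp x)/(Real.exp x - 1)^2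
          = Real.exp x/(Real.exp x - 1)^2 - 1/x^2 := by ring
      rw [heq]
      linarith
  intro a ha b hb hab
  have := main ha hb hab
  simpa [Fc, (Set.mem_Ioi.1 ha).ne', (Set.mem_Ioi.1 hb).ne'] using this

lemma Fc_zero : Fc 0 = 1/2 := by simp [Fc]

lemma half_lt_Fc {x : ℝ} (hx : x < 0) : 1/2 < Fc x := by
  have h := Fc_lt_half (x := -x) (by linarith)
  rw [Fc_neg] at h
  linarith

lemma Fc_strictAnti : StrictAnti Fc := by
  intro x y hxy
  rcases lt_trichotomy x 0 with hx | hx | hx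
  · rcases lt_trichotomy y 0 with hy | hy | hy
    · have h1 : Fc (-x) < Fc (-y) := Fc_antiOn (Set.mem_Ioi.2 (by linarith))
        (Set.mem_Ioi.2 (by linarith)) (by linarith)
      have e1 := Fc_neg x
      have e2 := Fc_neg y
      linarith
    · subst hy; rw [Fc_zero]; exact half_lt_Fc hx
    · have := Fc_lt_half hy
      have := half_lt_Fc hx
      linarith
  · subst hx
    have hy : 0 < y := hxy
    rw [Fc_zero]
    exact Fc_lt_half hy
  · exact Fc_antiOn (Set.mem_Ioi.2 hx) (Set.mem_Ioi.2 (by linarith)) hxy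

theorem G_strictAnti (L R : ℝ) (hL : 0 < L) (hLR : L < R) :
    StrictAnti (fun a : ℝ =>
      if a = 0 then (Real.log L + Real.log R) / 2
      else 1 / a +
        (Real.log L * L ^ (-a) - Real.log R * R ^ (-a)) / (L ^ (-a) - R ^ (-a))) := by
  have hR : 0 < R := hL.trans hLR
  have hlr : Real.log L < Real.log R := Real.log_lt_log hL hLR
  set l := Real.log L with hl
  set r := Real.log R with hr
  have hd : 0 < r - l := by linarith
  have eq1 : ∀ a : ℝ, (if a = 0 then (l + r) / 2
      else 1 / a + (l * L ^ (-a) - r * R ^ (-a)) / (L ^ (-a) - R ^ (-a)))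
      = l + (r - l) * Fc ((r - l) * a) := by
    intro a
    by_cases ha : a = 0
    · subst ha
      rw [if_pos rfl, mul_zero, Fc_zero]
      ring
    · rw [if_neg ha, Fc, if_neg (mul_ne_zero hd.ne' ha)]
      rw [Real.rpow_def_of_pos hL, Real.rpow_def_of_pos hR, ← hl, ← hr]
      have hrw : Real.exp (l * (-a)) = Real.exp ((r - l) * a) * Real.exp (r * (-a)) := by
        rw [← Real.exp_add]; ring_nf
      rw [hrw]
      set w := Real.exp ((r - l) * a) with hwdef
      set v := Real.exp (r * (-a)) with hvdef
      have hv : v ≠ 0 := Real.exp_ne_zero _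
      have hw1 : w - 1 ≠ 0 := by
        intro h
        have : (r - l) * a = 0 := by
          rwa [sub_eq_zero, hwdef, Real.exp_eq_one_iff] at h
        exact (mul_ne_zero hd.ne' ha) this
      have hden : w * v - v ≠ 0 := by
        intro h
        apply hw1
        have : (w - 1) * v = 0 := by ring_nf; linarith [h]
        rcases mul_eq_zero.1 this with h' | h'
        · exact h'
        · exact absurd h' hv
      field_simp
      ring
  intro a b hab
  simp only [eq1]
  have h3 : Fc ((r - l) * b) < Fc ((r - l) * a) :=
    Fc_strictAnti (mul_lt_mul_of_pos_left hab hd)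
  have := mul_lt_mul_of_pos_left h3 hd
  linarith
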